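/- Let R be the K-algebra generated by x_1,...,x_n subject to the n(n-1)/2 relations x_j x_i - q_{ij} x_i x_j = r_{ij} for 1 ≤ i < j ≤ n. Then the following are equivalent: (1) the standard monomials x_1^{a_1} x_2^{a_2} ... x_n^{a_n} (with a_1,...,a_n ranging over the non-negative integers) form a K-basis of R; (2) whenever i, j, k ∈ {1,...,n} are distinct and r_{ij} ≠ 0, one has q_{ik} = q_{kj} = q_{jk}^{-1}; (3) for every permutation σ of {1,...,n}, the monomials x_{σ(1)}^{a_1} x_{σ(2)}^{a_2} ... x_{σ(n)}^{a_n} form a K-basis of R. -/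

import Mathlib

noncomputable section
open FreeAlgebra

/-- The `n(n-1)/2` defining relations `x_j x_i - q_{ij} x_i x_j = r_{ij}` for `i < j`
(generators indexed `0,…,n-1`, corresponding to `x_1,…,x_n`). -/
inductive PresRel (K : Type) [Field K] (n : ℕ) (q r : Fin n → Fin n → K) :
    FreeAlgebra K (Fin n) → FreeAlgebra K (Fin n) → Prop
  | mk (i j : Fin n) (hij : i < j) :
      PresRel K n q r (ι K j * ι K i)
        (q i j • (ι K i * ι K j) + algebraMap K (FreeAlgebra K (Fin n)) (r i j))

/-- The standard monomial `x_1^{a_1} ⋯ x_n^{a_n}` (product taken in increasing index order). -/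
def stdMonomial {R : Type} [Ring R] (n : ℕ) (x : Fin n → R) (a : Fin n → ℕ) : R :=
  ((List.finRange n).map (fun i => x i ^ a i)).prod

/-- The family of standard monomials (indexed by exponent vectors) is a `K`-basis of `R`. -/
def IsMonBasis (K : Type) [Field K] {R : Type} [Ring R] [Algebra K R] (n : ℕ)
    (x : Fin n → R) : Prop :=
  LinearIndependent K (fun a : Fin n → ℕ => stdMonomial n x a) ∧
    Submodule.span K (Set.range (fun a : Fin n → ℕ => stdMonomial n x a)) = ⊤

namespace QPBW

variable {A : Type} [Ring A] {n : ℕ}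

def E (i : Fin n) : Fin n → ℕ := Pi.single i 1

lemma E_apply (i l : Fin n) : E i l = if l = i then 1 else 0 := by
  simp [E, Pi.single_apply]

lemma addE_apply (a : Fin n → ℕ) (i l : Fin n) :
    (a + E i) l = a l + (if l = i then 1 else 0) := by simp [E_apply]

lemma subE_apply (a : Fin n → ℕ) (i l : Fin n) :
    (a - E i) l = a l - (if l = i then 1 else 0) := by
  simp [Pi.sub_apply, E_apply]

lemma addE_apply_ne (a : Fin n → ℕ) {i l : Fin n} (h : l ≠ i) : (a + E i) l = a l := by
  simp [addE_apply, E_apply, h]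

lemma subE_apply_ne (a : Fin n → ℕ) {i l : Fin n} (h : l ≠ i) : (a - E i) l = a l := by
  simp [subE_apply, E_apply, h]

lemma addE_apply_self (a : Fin n → ℕ) (i : Fin n) : (a + E i) i = a i + 1 := by
  simp [addE_apply, E_apply]

lemma subE_apply_self (a : Fin n → ℕ) (i : Fin n) : (a - E i) i = a i - 1 := by
  simp [subE_apply, E_apply]

lemma add_sub_E (a : Fin n → ℕ) (i : Fin n) : a + E i - E i = a := by
  funext l
  rcases eq_or_ne l i with rfl | h
  · simp [subE_apply_self, addE_apply_self]
  · simp [subE_apply_ne _ h, addE_apply_ne _ h]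

lemma E_ne {i j : Fin n} (h : i ≠ j) : E i ≠ E j := by
  intro he
  have := congrFun he i
  simp [E_apply, h] at this

lemma sum_subE {a : Fin n → ℕ} {j : Fin n} (hj : a j ≠ 0) :
    (∑ l, (a - E j) l) + 1 = ∑ l, a l := by
  rw [← Finset.sum_erase_add _ _ (Finset.mem_univ j),
    ← Finset.sum_erase_add _ a (Finset.mem_univ j)]
  have h1 : ∑ l ∈ Finset.univ.erase j, (a - E j) l = ∑ l ∈ Finset.univ.erase j, a l :=
    Finset.sum_congr rfl fun l hl => subE_apply_ne _ (Finset.ne_of_mem_erase hl)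
  rw [h1, subE_apply_self, add_assoc, Nat.sub_add_cancel (Nat.one_le_iff_ne_zero.2 hj)]

/-- product of the tail of the standard monomial, from position `j` on. -/
def dp (x : Fin n → A) (a : Fin n → ℕ) (j : ℕ) : A :=
  (((List.finRange n).drop j).map (fun i => x i ^ a i)).prod

lemma dp_zero (x : Fin n → A) (a : Fin n → ℕ) : dp x a 0 = stdMonomial n x a := rfl

lemma mem_drop_finRange {j : ℕ} {i : Fin n} (h : i ∈ (List.finRange n).drop j) :
    j ≤ i.val := by
  obtain ⟨t, ht, rfl⟩ := List.mem_iff_getElem.1 h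
  simp only [List.getElem_drop, List.getElem_finRange]
  simp [Nat.le_add_right]

lemma dp_succ (x : Fin n → A) (a : Fin n → ℕ) {j : ℕ} (hj : j < n) :
    dp x a j = x ⟨j, hj⟩ ^ a ⟨j, hj⟩ * dp x a (j + 1) := by
  unfold dp
  rw [List.drop_eq_getElem_cons (by simpa using hj), List.map_cons, List.prod_cons]
  congr 1 <;> simp [List.getElem_finRange, Fin.cast]

lemma dp_congr (x : Fin n → A) {a b : Fin n → ℕ} (j : ℕ)
    (h : ∀ i : Fin n, j ≤ i.val → a i = b i) : dp x a j = dp x b j := by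
  unfold dp
  congr 1
  refine List.map_congr_left fun i hi => ?_
  rw [h i (mem_drop_finRange hi)]

lemma dp_of_ge (x : Fin n → A) (a : Fin n → ℕ) (j : ℕ)
    (h : ∀ i : Fin n, j ≤ i.val → a i = 0) : dp x a j = 1 := by
  refine List.prod_eq_one fun y hy => ?_
  obtain ⟨i, hi, rfl⟩ := List.mem_map.1 hy
  rw [h i (mem_drop_finRange hi), pow_zero]

lemma stdMonomial_eq_dp (x : Fin n → A) (a : Fin n → ℕ) (j : ℕ)
    (h : ∀ i : Fin n, i.val < j → a i = 0) : stdMonomial n x a = dp x a j := by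
  induction j with
  | zero => exact (dp_zero x a).symm
  | succ j ih =>
    rw [ih fun i hi => h i (Nat.lt_succ_of_lt hi)]
    rcases Nat.lt_or_ge j n with hj | hj
    · rw [dp_succ x a hj, h ⟨j, hj⟩ (Nat.lt_succ_self j), pow_zero, one_mul]
    · unfold dp
      rw [List.drop_eq_nil_of_le (by simpa using hj),
        List.drop_eq_nil_of_le (by simp; omega)]

lemma stdMonomial_factor (x : Fin n → A) (a : Fin n → ℕ) (j : Fin n)
    (h0 : ∀ l : Fin n, l.val < j.val → a l = 0) (hj : a j ≠ 0) :
    stdMonomial n x a = x j * stdMonomial n x (a - E j) := by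
  have h0' : ∀ l : Fin n, l.val < j.val → (a - E j) l = 0 := fun l hl => by
    rw [subE_apply_ne a (by exact fun he => absurd (congrArg Fin.val he) (Nat.ne_of_lt hl))]
    exact h0 l hl
  rw [stdMonomial_eq_dp x a j.val h0, stdMonomial_eq_dp x _ j.val h0',
    dp_succ x a j.is_lt, dp_succ x _ j.is_lt]
  have he : (⟨j.val, j.is_lt⟩ : Fin n) = j := rfl
  rw [he]
  have hd : dp x (a - E j) (j.val + 1) = dp x a (j.val + 1) :=
    dp_congr x _ fun i hi => subE_apply_ne a fun hij => by
      rw [hij] at hi; omega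
  rw [hd, subE_apply_self, ← mul_assoc, ← pow_succ',
    Nat.sub_add_cancel (Nat.one_le_iff_ne_zero.2 hj)]

lemma stdMonomial_zero (x : Fin n → A) : stdMonomial n x 0 = 1 := by
  rw [stdMonomial_eq_dp x 0 0 (by simp)]
  exact dp_of_ge x 0 0 (by simp)

lemma stdMonomial_E (x : Fin n → A) (i : Fin n) : stdMonomial n x (E i) = x i := by
  rw [stdMonomial_factor x (E i) i (fun l hl => by
      rw [E_apply]; simp [Fin.ne_of_lt]; intro h; omega) (by simp [E_apply])]
  have : E i - E i = (0 : Fin n → ℕ) := by funext l; simp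
  rw [this, stdMonomial_zero, mul_one]


variable {K : Type} [Field K] (q r : Fin n → Fin n → K)


def geom (m : ℕ) (t : K) : K := ∑ s ∈ Finset.range m, t ^ s

lemma geom_zero (t : K) : geom 0 t = 0 := by simp [geom]
lemma geom_one (t : K) : geom 1 t = 1 := by simp [geom]
lemma geom_succ (m : ℕ) (t : K) : geom (m + 1) t = 1 + t * geom m t := by
  rw [geom, Finset.sum_range_succ', geom, Finset.mul_sum]
  simp [pow_succ, mul_comm, add_comm]
lemma geom_succ' (m : ℕ) (t : K) : geom (m + 1) t = geom m t + t ^ m := by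
  rw [geom, Finset.sum_range_succ, geom]

lemma geom_inv {t : K} (ht : t ≠ 0) (m : ℕ) :
    t ^ m * geom (m + 1) t⁻¹ = geom (m + 1) t := by
  induction m with
  | zero => simp [geom_one]
  | succ m ih =>
    rw [geom_succ (m+1) t⁻¹, geom_succ' (m+1) t]
    have : t ^ (m + 1) * (1 + t⁻¹ * geom (m + 1) t⁻¹) =
        t ^ (m + 1) + t ^ m * geom (m + 1) t⁻¹ := by
      field_simp; ring
    rw [this, ih]; ring

lemma qgeom_key {t : K} (ht : t ≠ 0) (m : ℕ) :
    geom m t * geom (m - 1) t⁻¹ = t * geom m t⁻¹ * geom (m - 1) t := by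
  match m with
  | 0 => simp [geom_zero]
  | 1 => simp [geom_zero]
  | (s + 2) =>
    have h1 := geom_inv ht s
    have h2 := geom_inv ht (s + 1)
    apply mul_left_cancel₀ (pow_ne_zero (s + 1) ht)
    show t ^ (s+1) * (geom (s+2) t * geom (s+1) t⁻¹) =
      t ^ (s+1) * (t * geom (s+2) t⁻¹ * geom (s+1) t)
    calc t ^ (s+1) * (geom (s+2) t * geom (s+1) t⁻¹)
        = geom (s+2) t * (t * (t ^ s * geom (s+1) t⁻¹)) := by ring
      _ = geom (s+2) t * (t * geom (s+1) t) := by rw [h1]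
      _ = t * (t ^ (s+1) * geom (s+2) t⁻¹) * geom (s+1) t := by rw [h2]; ring
      _ = t ^ (s+1) * (t * geom (s+2) t⁻¹ * geom (s+1) t) := by ring

/-- `∏_{l < k} q_{l i}^{a_l}`. -/
def Pp (i k : Fin n) (a : Fin n → ℕ) : K := ∏ l ∈ Finset.Iio k, q l i ^ a l

def Cc (i : Fin n) (a : Fin n → ℕ) : K := Pp q i i a

def Dd (i k : Fin n) (a : Fin n → ℕ) : K := r k i * geom (a k) (q k i) * Pp q i k a

lemma Dd_zero {a : Fin n → ℕ} {k : Fin n} (i : Fin n) (h : a k = 0) : Dd q r i k a = 0 := by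
  simp [Dd, h, geom_zero]

lemma Pp_addE_not_lt (i : Fin n) {k m : Fin n} (a : Fin n → ℕ) (h : ¬ m < k) :
    Pp q i k (a + E m) = Pp q i k a :=
  Finset.prod_congr rfl fun l hl => by
    rw [addE_apply_ne a (fun he : l = m => h (he ▸ Finset.mem_Iio.1 hl))]

lemma Pp_subE_not_lt (i : Fin n) {k m : Fin n} (a : Fin n → ℕ) (h : ¬ m < k) :
    Pp q i k (a - E m) = Pp q i k a :=
  Finset.prod_congr rfl fun l hl => by
    rw [subE_apply_ne a (fun he : l = m => h (he ▸ Finset.mem_Iio.1 hl))]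

lemma Pp_addE_lt (i : Fin n) {k m : Fin n} (a : Fin n → ℕ) (h : m < k) :
    Pp q i k (a + E m) = q m i * Pp q i k a := by
  unfold Pp
  rw [← Finset.mul_prod_erase _ _ (Finset.mem_Iio.2 h),
    ← Finset.mul_prod_erase _ (fun l => q l i ^ a l) (Finset.mem_Iio.2 h)]
  rw [addE_apply_self, pow_succ']
  rw [Finset.prod_congr rfl (fun l hl => by
    rw [addE_apply_ne a (Finset.ne_of_mem_erase hl)])]
  ring

lemma Pp_subE_lt (i : Fin n) {k m : Fin n} (a : Fin n → ℕ) (h : m < k) (hm : a m ≠ 0) :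
    q m i * Pp q i k (a - E m) = Pp q i k a := by
  unfold Pp
  rw [← Finset.mul_prod_erase _ _ (Finset.mem_Iio.2 h),
    ← Finset.mul_prod_erase _ (fun l => q l i ^ a l) (Finset.mem_Iio.2 h)]
  rw [subE_apply_self, ← mul_assoc, ← pow_succ', Nat.sub_add_cancel (Nat.one_le_iff_ne_zero.2 hm)]
  rw [Finset.prod_congr rfl (fun l hl => by
    rw [subE_apply_ne a (Finset.ne_of_mem_erase hl)])]

section Cond
variable (hq0 : ∀ i j : Fin n, i ≠ j → q i j ≠ 0)
    (hqinv : ∀ i j : Fin n, i ≠ j → q j i = (q i j)⁻¹)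
    (hc : ∀ i j k : Fin n, i ≠ j → j ≠ k → i ≠ k → r i j ≠ 0 →
      q i k = (q j k)⁻¹ ∧ q k j = (q j k)⁻¹)

include hq0 hc in
/-- from `r k i ≠ 0` (with `i j k` distinct): `q i j * q k j = 1`. -/
lemma key2 {i j k : Fin n} (hki : k ≠ i) (hijj : i ≠ j) (hkj : k ≠ j) (h : r k i ≠ 0) :
    q i j * q k j = 1 := by
  have := (hc k i j hki hijj hkj h).1
  rw [this, mul_inv_cancel₀ (hq0 i j hijj)]

include hq0 hqinv hc in
/-- from `r l j ≠ 0` (with distinct): `q l i = q i j`. -/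
lemma key2' {i j l : Fin n} (hlj : l ≠ j) (hji : j ≠ i) (hli : l ≠ i) (h : r l j ≠ 0) :
    q l i = q i j := by
  have := (hc l j i hlj hji hli h).1
  rw [this, hqinv i j (Ne.symm hji), inv_inv]

include hq0 hqinv hc in
/-- from `r i j ≠ 0` (with `m` distinct from `i,j`): `q m i * q m j = 1`. -/
lemma key3 {i j m : Fin n} (hij : i ≠ j) (hjm : j ≠ m) (him : i ≠ m) (h : r i j ≠ 0) :
    q m i * q m j = 1 := by
  have h1 := (hc i j m hij hjm him h).1
  have h2 : q m i = (q i m)⁻¹ := hqinv i m him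
  have h3 : q j m = (q m j)⁻¹ := hqinv m j (Ne.symm hjm)
  rw [h2, h1, h3, inv_inv, inv_mul_cancel₀ (hq0 m j (Ne.symm hjm))]

include hq0 hqinv hc in
lemma CP1 {i j : Fin n} (a : Fin n → ℕ) (hij : i < j) (hr : r i j ≠ 0) :
    Cc q i a * Pp q j i a = 1 := by
  unfold Cc Pp
  rw [← Finset.prod_mul_distrib]
  rw [Finset.prod_congr rfl (fun m hm => ?_), Finset.prod_const_one]
  have hmi : m ≠ i := Fin.ne_of_lt (Finset.mem_Iio.1 hm)
  have hmj : m ≠ j := Fin.ne_of_lt (lt_trans (Finset.mem_Iio.1 hm) hij)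
  rw [← mul_pow, key3 q r hq0 hqinv hc (Fin.ne_of_lt hij) (Ne.symm hmj) (Ne.symm hmi) hr,
    one_pow]



include hq0 hqinv hc in
lemma coeffA {i j : Fin n} (a : Fin n → ℕ) (hij : i < j) :
    Cc q i a * Cc q j (a + E i) = q i j * (Cc q j a * Cc q i (a + E j)) := by
  unfold Cc
  rw [Pp_addE_lt q j a hij, Pp_addE_not_lt q i a (not_lt.2 hij.le)]
  ring

include hq0 hqinv hc in
lemma coeffB {i j k : Fin n} (a : Fin n → ℕ) (hij : i < j) (hk : k < i) :
    Dd q r i k a * Cc q j (a - E k) = q i j * (Cc q j a * Dd q r i k (a + E j)) := by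
  have hDD : Dd q r i k (a + E j) = Dd q r i k a := by
    unfold Dd
    rw [addE_apply_ne a (Fin.ne_of_lt (hk.trans hij)),
      Pp_addE_not_lt q i a (not_lt.2 (hk.trans hij).le)]
  rcases eq_or_ne (a k) 0 with h0 | h0
  · rw [hDD, Dd_zero q r i h0]; ring
  rcases eq_or_ne (r k i) 0 with hr | hr
  · rw [hDD]; unfold Dd; rw [hr]; ring
  have hCj : Cc q j a = q k j * Cc q j (a - E k) := (Pp_subE_lt q j a (hk.trans hij) h0).symm
  have hkey : q i j * q k j = 1 :=
    key2 q r hq0 hc (Fin.ne_of_lt hk) (Fin.ne_of_lt hij) (Fin.ne_of_lt (hk.trans hij)) hr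
  rw [hDD, hCj]
  linear_combination (-(Dd q r i k a * Cc q j (a - E k))) * hkey

include hq0 hqinv hc in
lemma coeffC {i j k : Fin n} (a : Fin n → ℕ) (hij : i < j) (hkj : k < j) (hki : k ≠ i) :
    Cc q i a * Dd q r j k (a + E i) = q i j * (Dd q r j k a * Cc q i (a - E k)) := by
  rcases lt_or_gt_of_ne hki with h | h
  · -- k < i
    have hDD : Dd q r j k (a + E i) = Dd q r j k a := by
      unfold Dd
      rw [addE_apply_ne a hki, Pp_addE_not_lt q j a (not_lt.2 h.le)]
    rcases eq_or_ne (a k) 0 with h0 | h0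
    · rw [hDD, Dd_zero q r j h0]; ring
    rcases eq_or_ne (r k j) 0 with hr | hr
    · rw [hDD]; unfold Dd; rw [hr]; ring
    have hCi : Cc q i a = q k i * Cc q i (a - E k) := (Pp_subE_lt q i a h h0).symm
    have hkey : q k i = q i j :=
      key2' q r hq0 hqinv hc (Fin.ne_of_lt hkj) (Fin.ne_of_lt hij).symm hki hr
    rw [hDD, hCi, hkey]; ring
  · -- i < k
    have hDD : Dd q r j k (a + E i) = q i j * Dd q r j k a := by
      unfold Dd
      rw [addE_apply_ne a hki, Pp_addE_lt q j a h]; ring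
    have hCc : Cc q i (a - E k) = Cc q i a := Pp_subE_not_lt q i a (not_lt.2 h.le)
    rw [hDD, hCc]; ring

include hq0 hqinv hc in
lemma coeffD {i j k l : Fin n} (a : Fin n → ℕ) (hij : i < j) (hk : k < i) (hl : l < j) :
    Dd q r i k a * Dd q r j l (a - E k) = q i j * (Dd q r j l a * Dd q r i k (a - E l)) := by
  rcases lt_trichotomy k l with h | rfl | h
  · -- k < l
    have hik : Dd q r i k (a - E l) = Dd q r i k a := by
      unfold Dd
      rw [subE_apply_ne a (Fin.ne_of_lt h), Pp_subE_not_lt q i a (not_lt.2 h.le)]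
    rcases eq_or_ne (a k) 0 with h0 | h0
    · rw [hik, Dd_zero q r i h0]; ring
    rcases eq_or_ne (r k i) 0 with hr | hr
    · rw [hik]; unfold Dd; rw [hr]; ring
    have hkey : q i j * q k j = 1 :=
      key2 q r hq0 hc (Fin.ne_of_lt hk) (Fin.ne_of_lt hij) (Fin.ne_of_lt (hk.trans hij)) hr
    rw [hik]
    unfold Dd
    rw [subE_apply_ne a (Fin.ne_of_lt h).symm, ← Pp_subE_lt q j a h h0]
    linear_combination (-(r k i * geom (a k) (q k i) * Pp q i k a * (r l j *
      geom (a l) (q l j) * Pp q j l (a - E k)))) * hkey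
  · -- k = l
    rcases eq_or_ne (a k) 0 with h0 | h0
    · rw [Dd_zero q r i h0, Dd_zero q r j h0]; ring
    rcases eq_or_ne (r k i) 0 with hri | hri
    · unfold Dd; rw [hri]; ring
    rcases eq_or_ne (r k j) 0 with hrj | hrj
    · unfold Dd; rw [hrj]; ring
    have ht : q k i = q i j :=
      key2' q r hq0 hqinv hc (Fin.ne_of_lt hl) (Fin.ne_of_lt hij).symm (Fin.ne_of_lt hk) hrj
    have ht2 : q k j = (q i j)⁻¹ :=
      (hc k i j (Fin.ne_of_lt hk) (Fin.ne_of_lt hij) (Fin.ne_of_lt hl) hri).1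
    have hq : q i j ≠ 0 := hq0 i j (Fin.ne_of_lt hij)
    unfold Dd
    rw [subE_apply_self, Pp_subE_not_lt q j a (lt_irrefl k), Pp_subE_not_lt q i a (lt_irrefl k),
      ht, ht2]
    have hgeo := qgeom_key hq (a k)
    linear_combination (r k i * r k j * Pp q i k a * Pp q j k a) * hgeo
  · -- l < k
    have hjl : Dd q r j l (a - E k) = Dd q r j l a := by
      unfold Dd
      rw [subE_apply_ne a (Fin.ne_of_lt h), Pp_subE_not_lt q j a (not_lt.2 h.le)]
    rcases eq_or_ne (a l) 0 with h0 | h0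
    · rw [hjl, Dd_zero q r j h0]; ring
    rcases eq_or_ne (r l j) 0 with hr | hr
    · rw [hjl]; unfold Dd; rw [hr]; ring
    have hkey : q l i = q i j :=
      key2' q r hq0 hqinv hc (Fin.ne_of_lt hl) (Fin.ne_of_lt hij).symm
        (Fin.ne_of_lt (h.trans hk)) hr
    rw [hjl]
    unfold Dd
    rw [subE_apply_ne a (Fin.ne_of_lt h).symm, ← Pp_subE_lt q i a h h0, hkey]
    ring

include hq0 hqinv hc in
lemma coeffE0 {i j : Fin n} (a : Fin n → ℕ) (hij : i < j) (hai : a i = 0) :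
    Cc q i a * Dd q r j i (a + E i) = r i j := by
  unfold Dd
  rw [addE_apply_self, hai, Pp_addE_not_lt q j a (lt_irrefl i), geom_one]
  rcases eq_or_ne (r i j) 0 with hr | hr
  · rw [hr]; ring
  · have h1 := CP1 q r hq0 hqinv hc a hij hr
    linear_combination (r i j) * h1

include hq0 hqinv hc in
lemma coeffE {i j : Fin n} (a : Fin n → ℕ) (hij : i < j) :
    Cc q i a * Dd q r j i (a + E i) = r i j + q i j * (Dd q r j i a * Cc q i (a - E i)) := by
  unfold Dd
  rw [addE_apply_self, geom_succ, Pp_addE_not_lt q j a (lt_irrefl i),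
    show Cc q i (a - E i) = Cc q i a from Pp_subE_not_lt q i a (lt_irrefl i)]
  rcases eq_or_ne (r i j) 0 with hr | hr
  · rw [hr]; ring
  · have h1 := CP1 q r hq0 hqinv hc a hij hr
    linear_combination (r i j) * h1



end Cond

open Finset in
lemma addE_comm (a : Fin n → ℕ) (i j : Fin n) : a + E i + E j = a + E j + E i := by
  rw [add_assoc, add_assoc, add_comm (E i)]

lemma subE_addE_comm (a : Fin n → ℕ) {k j : Fin n} (h : k ≠ j) :
    a - E k + E j = a + E j - E k := by
  funext l
  simp only [Pi.add_apply, Pi.sub_apply, E_apply]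
  by_cases h1 : l = k <;> by_cases h2 : l = j
  · exact absurd (h1.symm.trans h2) h
  · rw [if_pos h1, if_neg h2]; omega
  · rw [if_pos h2, if_neg h1]; omega
  · rw [if_neg h1, if_neg h2]; omega

lemma subE_subE_comm (a : Fin n → ℕ) (k l : Fin n) : a - E k - E l = a - E l - E k := by
  funext m
  simp only [Pi.sub_apply, E_apply]
  omega

lemma sub_add_E {a : Fin n → ℕ} {i : Fin n} (h : a i ≠ 0) : a - E i + E i = a := by
  funext l
  simp only [Pi.add_apply, Pi.sub_apply, E_apply]
  by_cases h1 : l = i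
  · subst h1; simp; omega
  · simp [h1]

lemma add_sub_E' (a : Fin n → ℕ) (i : Fin n) : a + E i - E i = a := by
  funext l
  simp only [Pi.add_apply, Pi.sub_apply, E_apply]
  by_cases h1 : l = i <;> simp [h1]

lemma smul_single_congr {c c' : K} {v v' : Fin n → ℕ} (hc : c = c')
    (h : c = 0 ∨ v = v') : c • Finsupp.single v (1:K) = c' • Finsupp.single v' 1 := by
  subst hc
  rcases h with h0 | rfl
  · simp [h0]
  · rfl

def Ff (i : Fin n) (a : Fin n → ℕ) : (Fin n → ℕ) →₀ K :=
  Cc q i a • Finsupp.single (a + E i) 1 +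
    ∑ k ∈ Finset.Iio i, Dd q r i k a • Finsupp.single (a - E k) 1

def L (i : Fin n) : ((Fin n → ℕ) →₀ K) →ₗ[K] ((Fin n → ℕ) →₀ K) :=
  Finsupp.linearCombination K (Ff q r i)

lemma L_single (i : Fin n) (a : Fin n → ℕ) :
    L q r i (Finsupp.single a 1) = Ff q r i a := by
  simp [L, Finsupp.linearCombination_single]

open Finset in
lemma L_Ff (i j : Fin n) (a : Fin n → ℕ) :
    L q r j (Ff q r i a) =
      (Cc q i a * Cc q j (a + E i)) • Finsupp.single (a + E i + E j) 1
      + ∑ k ∈ Iio j, (Cc q i a * Dd q r j k (a + E i)) • Finsupp.single (a + E i - E k) 1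
      + ∑ k ∈ Iio i, (Dd q r i k a * Cc q j (a - E k)) • Finsupp.single (a - E k + E j) 1
      + ∑ k ∈ Iio i, ∑ l ∈ Iio j,
          (Dd q r i k a * Dd q r j l (a - E k)) • Finsupp.single (a - E k - E l) 1 := by
  unfold Ff
  rw [map_add, map_smul, map_sum]
  simp only [map_smul, L_single]
  unfold Ff
  simp only [smul_add, Finset.smul_sum, smul_smul, Finset.sum_add_distrib]
  abel

section Cond2
variable (hq0 : ∀ i j : Fin n, i ≠ j → q i j ≠ 0)
    (hqinv : ∀ i j : Fin n, i ≠ j → q j i = (q i j)⁻¹)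
    (hc : ∀ i j k : Fin n, i ≠ j → j ≠ k → i ≠ k → r i j ≠ 0 →
      q i k = (q j k)⁻¹ ∧ q k j = (q j k)⁻¹)

open Finset in
include hq0 hqinv hc in
lemma L_rel {i j : Fin n} (hij : i < j) (a : Fin n → ℕ) :
    L q r j (Ff q r i a) =
      q i j • L q r i (Ff q r j a) + r i j • Finsupp.single a 1 := by
  rw [L_Ff q r i j a, L_Ff q r j i a]
  have hT1 : (Cc q i a * Cc q j (a + E i)) • Finsupp.single (a + E i + E j) (1:K)
      = q i j • ((Cc q j a * Cc q i (a + E j)) • Finsupp.single (a + E j + E i) 1) := by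
    rw [smul_smul]
    exact smul_single_congr (coeffA q r hq0 hqinv hc a hij) (Or.inr (addE_comm a i j))
  have hS3 : (∑ k ∈ Iio i, (Dd q r i k a * Cc q j (a - E k)) • Finsupp.single (a - E k + E j) (1:K))
      = q i j • ∑ k ∈ Iio i, (Cc q j a * Dd q r i k (a + E j)) • Finsupp.single (a + E j - E k) 1 := by
    rw [Finset.smul_sum]
    refine Finset.sum_congr rfl fun k hk => ?_
    rw [smul_smul]
    exact smul_single_congr (coeffB q r hq0 hqinv hc a hij (mem_Iio.1 hk))
      (Or.inr (subE_addE_comm a (Fin.ne_of_lt ((mem_Iio.1 hk).trans hij))))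
  have hS4 : (∑ k ∈ Iio i, ∑ l ∈ Iio j,
        (Dd q r i k a * Dd q r j l (a - E k)) • Finsupp.single (a - E k - E l) (1:K))
      = q i j • ∑ k ∈ Iio j, ∑ l ∈ Iio i,
        (Dd q r j k a * Dd q r i l (a - E k)) • Finsupp.single (a - E k - E l) 1 := by
    rw [Finset.smul_sum, Finset.sum_comm]
    refine Finset.sum_congr rfl fun k hk => ?_
    rw [Finset.smul_sum]
    refine Finset.sum_congr rfl fun l hl => ?_
    rw [smul_smul]
    exact smul_single_congr (coeffD q r hq0 hqinv hc a hij (mem_Iio.1 hl) (mem_Iio.1 hk))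
      (Or.inr (subE_subE_comm a l k))
  have hS2 : (∑ k ∈ Iio j, (Cc q i a * Dd q r j k (a + E i)) • Finsupp.single (a + E i - E k) (1:K))
      = (q i j • ∑ k ∈ Iio j, (Dd q r j k a * Cc q i (a - E k)) • Finsupp.single (a - E k + E i) 1)
        + r i j • Finsupp.single a 1 := by
    have hi_mem : i ∈ Finset.Iio j := Finset.mem_Iio.2 hij
    rw [Finset.smul_sum]
    rw [← Finset.add_sum_erase _ _ hi_mem,
      ← Finset.add_sum_erase _
        (fun k => q i j • ((Dd q r j k a * Cc q i (a - E k)) • Finsupp.single (a - E k + E i) (1:K)))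
        hi_mem]
    have herase : ∑ k ∈ (Iio j).erase i,
          (Cc q i a * Dd q r j k (a + E i)) • Finsupp.single (a + E i - E k) (1:K)
        = ∑ k ∈ (Iio j).erase i,
          q i j • ((Dd q r j k a * Cc q i (a - E k)) • Finsupp.single (a - E k + E i) 1) := by
      refine Finset.sum_congr rfl fun k hk => ?_
      have hkj : k < j := mem_Iio.1 (Finset.mem_of_mem_erase hk)
      have hki : k ≠ i := Finset.ne_of_mem_erase hk
      rw [smul_smul]
      refine smul_single_congr (coeffC q r hq0 hqinv hc a hij hkj hki) (Or.inr ?_)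
      rw [subE_addE_comm a hki]
    rw [herase]
    have hkey : (Cc q i a * Dd q r j i (a + E i)) • Finsupp.single (a + E i - E i) (1:K)
        = q i j • ((Dd q r j i a * Cc q i (a - E i)) • Finsupp.single (a - E i + E i) 1)
          + r i j • Finsupp.single a 1 := by
      rw [add_sub_E']
      rcases eq_or_ne (a i) 0 with h0 | h0
      · rw [coeffE0 q r hq0 hqinv hc a hij h0, Dd_zero q r j h0, zero_mul, zero_smul,
          smul_zero, zero_add]
      · rw [coeffE q r hq0 hqinv hc a hij, sub_add_E h0, add_smul, smul_smul, add_comm]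
    rw [hkey]
    abel
  rw [hT1, hS2, hS3, hS4, smul_add, smul_add, smul_add]
  abel

end Cond2

section Rep
variable (hq0 : ∀ i j : Fin n, i ≠ j → q i j ≠ 0)
    (hqinv : ∀ i j : Fin n, i ≠ j → q j i = (q i j)⁻¹)
    (hc : ∀ i j k : Fin n, i ≠ j → j ≠ k → i ≠ k → r i j ≠ 0 →
      q i k = (q j k)⁻¹ ∧ q k j = (q j k)⁻¹)

include hq0 hqinv hc in
lemma end_rel {i j : Fin n} (hij : i < j) :
    (L q r j * L q r i : Module.End K ((Fin n → ℕ) →₀ K)) =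
      q i j • (L q r i * L q r j) + algebraMap K _ (r i j) := by
  apply Finsupp.lhom_ext
  intro a b
  have hb : Finsupp.single a b = b • Finsupp.single a (1:K) := by
    rw [Finsupp.smul_single, smul_eq_mul, mul_one]
  rw [hb, map_smul, map_smul]
  congr 1
  simp only [Module.End.mul_apply, LinearMap.add_apply, LinearMap.smul_apply,
    Module.algebraMap_end_apply, L_single]
  exact L_rel q r hq0 hqinv hc hij a

def Xg : Fin n → RingQuot (PresRel K n q r) :=
  fun i => RingQuot.mkAlgHom K (PresRel K n q r) (ι K i)

def rep0 : FreeAlgebra K (Fin n) →ₐ[K] Module.End K ((Fin n → ℕ) →₀ K) :=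
  FreeAlgebra.lift K (L q r)

include hq0 hqinv hc in
lemma rep0_rel : ∀ ⦃x y⦄, PresRel K n q r x y → rep0 q r x = rep0 q r y := by
  rintro _ _ ⟨i, j, hij⟩
  simp only [rep0, map_mul, map_add, map_smul, FreeAlgebra.lift_ι_apply, AlgHom.commutes]
  exact end_rel q r hq0 hqinv hc hij

def rep : RingQuot (PresRel K n q r) →ₐ[K] Module.End K ((Fin n → ℕ) →₀ K) :=
  RingQuot.liftAlgHom K ⟨rep0 q r, rep0_rel q r hq0 hqinv hc⟩

lemma rep_X (i : Fin n) : rep q r hq0 hqinv hc (Xg q r i) = L q r i := by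
  rw [Xg, rep, RingQuot.liftAlgHom_mkAlgHom_apply, rep0, FreeAlgebra.lift_ι_apply]

open Finset in
lemma L_single_zeros {j : Fin n} {b : Fin n → ℕ} (hb : ∀ l : Fin n, l < j → b l = 0) :
    L q r j (Finsupp.single b 1) = Finsupp.single (b + E j) (1:K) := by
  rw [L_single]
  unfold Ff
  have hC : Cc q j b = 1 := by
    unfold Cc Pp
    exact Finset.prod_eq_one fun l hl => by rw [hb l (mem_Iio.1 hl), pow_zero]
  rw [hC, one_smul, Finset.sum_eq_zero fun k hk => by
    rw [Dd_zero q r j (hb k (mem_Iio.1 hk)), zero_smul], add_zero]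

lemma L_pow_single_zeros (j : Fin n) (m : ℕ) {b : Fin n → ℕ}
    (hb : ∀ l : Fin n, l < j → b l = 0) :
    (L q r j ^ m) (Finsupp.single b 1) = Finsupp.single (b + m • E j) (1:K) := by
  induction m with
  | zero => simp
  | succ m ih =>
    rw [pow_succ', Module.End.mul_apply, ih]
    have hb' : ∀ l : Fin n, l < j → (b + m • E j) l = 0 := fun l hl => by
      have hlj : l ≠ j := Fin.ne_of_lt hl
      simp [E_apply, hlj, hb l hl]
    rw [L_single_zeros q r hb']
    congr 1
    funext l
    simp only [Pi.add_apply, Pi.smul_apply, smul_eq_mul, E_apply]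
    by_cases h : l = j <;> simp [h] <;> omega

def trunc (j : ℕ) (a : Fin n → ℕ) : Fin n → ℕ := fun l => if j ≤ l.val then a l else 0

lemma rep_dp (a : Fin n → ℕ) :
    ∀ d j, j + d = n →
      rep q r hq0 hqinv hc (dp (Xg q r) a j) (Finsupp.single 0 1) =
        Finsupp.single (trunc j a) (1:K) := by
  intro d
  induction d with
  | zero =>
    intro j hj
    have h1 : dp (Xg q r) a j = 1 :=
      dp_of_ge _ a j (fun i hi => absurd i.isLt (by omega))
    rw [h1, map_one, Module.End.one_apply]
    congr 1
    funext l
    have := l.isLt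
    simp only [trunc]
    rw [if_neg (by omega)]
    rfl
  | succ d ih =>
    intro j hj
    have hjn : j < n := by omega
    rw [dp_succ (Xg q r) a hjn, map_mul, Module.End.mul_apply, ih (j+1) (by omega),
      map_pow, rep_X]
    have hb : ∀ l : Fin n, l < ⟨j, hjn⟩ → trunc (j+1) a l = 0 := fun l hl => by
      simp only [trunc]
      rw [if_neg (by exact Nat.not_le.2 (Nat.lt_succ_of_lt hl))]
    rw [L_pow_single_zeros q r _ _ hb]
    congr 1
    funext l
    simp only [trunc, Pi.add_apply, Pi.smul_apply, smul_eq_mul, E_apply]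
    by_cases h : l = ⟨j, hjn⟩
    · subst h
      rw [if_pos (le_refl j), if_neg (by simp), if_pos rfl]
      simp
    · have hv : l.val ≠ j := fun hv => h (Fin.ext hv)
      rw [if_neg h]
      split_ifs <;> omega

lemma rep_std (a : Fin n → ℕ) :
    rep q r hq0 hqinv hc (stdMonomial n (Xg q r) a) (Finsupp.single 0 1) =
      Finsupp.single a (1:K) := by
  rw [← dp_zero, rep_dp q r hq0 hqinv hc a n 0 (by omega)]
  congr 1

include hq0 hqinv hc in
theorem linIndep : LinearIndependent K (fun a : Fin n → ℕ => stdMonomial n (Xg q r) a) := by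
  let f : RingQuot (PresRel K n q r) →ₗ[K] ((Fin n → ℕ) →₀ K) :=
    { toFun := fun z => rep q r hq0 hqinv hc z (Finsupp.single 0 1)
      map_add' := fun x y => by simp only [map_add, LinearMap.add_apply]
      map_smul' := fun c x => by simp only [map_smul, LinearMap.smul_apply, RingHom.id_apply] }
  apply LinearIndependent.of_comp f
  have hfe : (⇑f ∘ fun a => stdMonomial n (Xg q r) a) =
      fun a : Fin n → ℕ => Finsupp.single a (1:K) := by
    funext a
    exact rep_std q r hq0 hqinv hc a
  rw [hfe]
  have := (Finsupp.basisSingleOne (R := K) (ι := Fin n → ℕ)).linearIndependent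
  simpa using this

end Rep

section Span
variable (hq0 : ∀ i j : Fin n, i ≠ j → q i j ≠ 0)
    (hqinv : ∀ i j : Fin n, i ≠ j → q j i = (q i j)⁻¹)
    (hrinv : ∀ i j : Fin n, i ≠ j → r j i = -(q i j)⁻¹ * r i j)

lemma X_rel {i j : Fin n} (hij : i < j) :
    Xg q r j * Xg q r i = q i j • (Xg q r i * Xg q r j) +
      algebraMap K (RingQuot (PresRel K n q r)) (r i j) := by
  have h := RingQuot.mkAlgHom_rel K (s := PresRel K n q r) (PresRel.mk i j hij)
  simpa only [map_mul, map_add, map_smul, AlgHom.commutes, Xg] using h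

include hq0 hqinv hrinv in
lemma X_rel' {i j : Fin n} (hij : i ≠ j) :
    Xg q r j * Xg q r i = q i j • (Xg q r i * Xg q r j) +
      algebraMap K (RingQuot (PresRel K n q r)) (r i j) := by
  rcases lt_or_gt_of_ne hij with h | h
  · exact X_rel q r h
  · rw [X_rel q r h, smul_add, smul_smul, hqinv i j hij,
      mul_inv_cancel₀ (hq0 i j hij), one_smul]
    have hscal : q i j • (algebraMap K (RingQuot (PresRel K n q r)) (r j i)) +
        algebraMap K (RingQuot (PresRel K n q r)) (r i j) = 0 := by
      rw [Algebra.smul_def, ← map_mul, ← map_add, hrinv i j hij]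
      have : q i j * (-(q i j)⁻¹ * r i j) + r i j = 0 := by
        rw [neg_mul, mul_neg, ← mul_assoc, mul_inv_cancel₀ (hq0 i j hij), one_mul,
          neg_add_cancel]
      rw [this, map_zero]
    rw [add_assoc, hscal, add_zero]

def Sm (m : ℕ) : Submodule K (RingQuot (PresRel K n q r)) :=
  Submodule.span K ((fun a => stdMonomial n (Xg q r) a) '' {a | ∑ l, a l ≤ m})

lemma Sm_mono {m m' : ℕ} (h : m ≤ m') : Sm q r m ≤ Sm q r m' :=
  Submodule.span_mono (Set.image_mono fun a ha => le_trans ha h)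

lemma mem_Sm {a : Fin n → ℕ} {m : ℕ} (ha : ∑ l, a l ≤ m) :
    stdMonomial n (Xg q r) a ∈ Sm q r m :=
  Submodule.subset_span ⟨a, ha, rfl⟩

lemma sum_addE (a : Fin n → ℕ) (i : Fin n) : (∑ l, (a + E i) l) = (∑ l, a l) + 1 := by
  simp only [Pi.add_apply]
  rw [Finset.sum_add_distrib]
  congr 1
  simp [E_apply]

lemma keyBase {m : ℕ} (i : Fin n) (a : Fin n → ℕ) (hz : ∀ l : Fin n, l < i → a l = 0)
    (ha : ∑ l, a l ≤ m) :
    Xg q r i * stdMonomial n (Xg q r) a ∈ Sm q r (m + 1) := by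
  have hz' : ∀ l : Fin n, l.val < i.val → (a + E i) l = 0 := fun l hl => by
    rw [addE_apply_ne a (Fin.ne_of_lt hl)]
    exact hz l hl
  have hfac := stdMonomial_factor (Xg q r) (a + E i) i hz'
    (by rw [addE_apply_self]; omega)
  rw [add_sub_E'] at hfac
  rw [← hfac]
  exact mem_Sm q r (by rw [sum_addE]; omega)

include hq0 hqinv hrinv in
lemma keyQ : ∀ m : ℕ, ∀ iv : ℕ, ∀ i : Fin n, i.val ≤ iv → ∀ a : Fin n → ℕ,
    (∑ l, a l) ≤ m → Xg q r i * stdMonomial n (Xg q r) a ∈ Sm q r (m + 1) := by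
  intro m
  induction m using Nat.strong_induction_on with
  | _ m IH1 =>
  intro iv
  induction iv with
  | zero =>
    intro i hi a ha
    exact keyBase q r i a (fun l hl => absurd (Fin.lt_def.1 hl) (by omega)) ha
  | succ iv IH2 =>
    intro i hi a ha
    by_cases hz : ∀ l : Fin n, l < i → a l = 0
    · exact keyBase q r i a hz ha
    · push_neg at hz
      obtain ⟨l0, hl0i, hl0⟩ := hz
      -- minimal index with nonzero exponent
      have hne : (Finset.univ.filter (fun l : Fin n => a l ≠ 0)).Nonempty :=
        ⟨l0, by simp [hl0]⟩
      set j := (Finset.univ.filter (fun l : Fin n => a l ≠ 0)).min' hne with hjdef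
      have hj : a j ≠ 0 := by
        have := Finset.min'_mem _ hne
        rw [← hjdef] at this
        exact (Finset.mem_filter.1 this).2
      have hjmin : ∀ l : Fin n, a l ≠ 0 → j ≤ l := fun l hl =>
        Finset.min'_le _ _ (by simp [hl])
      have hji : j < i := lt_of_le_of_lt (hjmin l0 hl0) hl0i
      have h0 : ∀ l : Fin n, l.val < j.val → a l = 0 := fun l hl => by
        by_contra hcon
        exact absurd (hjmin l hcon) (not_le.2 hl)
      have hfac := stdMonomial_factor (Xg q r) a j h0 hj
      have hsum : (∑ l, (a - E j) l) + 1 = ∑ l, a l := sum_subE hj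
      have hm1 : 1 ≤ m := le_trans (by omega : 1 ≤ ∑ l, a l) ha
      -- first piece
      have h1 : Xg q r i * stdMonomial n (Xg q r) (a - E j) ∈ Sm q r m := by
        have := IH1 (∑ l, (a - E j) l) (by omega) i.val i le_rfl (a - E j) le_rfl
        exact Sm_mono q r (by omega) this
      -- multiplication by X j preserves Sm m up to m+1
      have h2 : ∀ z ∈ Sm q r m, Xg q r j * z ∈ Sm q r (m + 1) := by
        intro z hz'
        refine Submodule.span_induction
          (p := fun z _ => Xg q r j * z ∈ Sm q r (m + 1)) ?_ ?_ ?_ ?_ hz'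
        · rintro _ ⟨b, hb, rfl⟩
          exact IH2 j (by omega) b hb
        · show Xg q r j * 0 ∈ Sm q r (m + 1)
          rw [mul_zero]; exact Submodule.zero_mem _
        · intro u v _ _ hu hv
          show Xg q r j * (u + v) ∈ Sm q r (m + 1)
          rw [mul_add]; exact Submodule.add_mem _ hu hv
        · intro c u _ hu
          show Xg q r j * (c • u) ∈ Sm q r (m + 1)
          rw [mul_smul_comm]; exact Submodule.smul_mem _ c hu
      rw [hfac, ← mul_assoc, X_rel' q r hq0 hqinv hrinv (Fin.ne_of_lt hji), add_mul,
        smul_mul_assoc, mul_assoc, ← Algebra.smul_def]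
      exact Submodule.add_mem _
        (Submodule.smul_mem _ _ (h2 _ h1))
        (Submodule.smul_mem _ _ (mem_Sm q r (by omega)))

include hq0 hqinv hrinv in
theorem spanTop :
    Submodule.span K (Set.range (fun a : Fin n → ℕ => stdMonomial n (Xg q r) a)) = ⊤ := by
  set S := Submodule.span K (Set.range (fun a : Fin n → ℕ => stdMonomial n (Xg q r) a)) with hSdef
  have hSm : ∀ m, Sm q r m ≤ S := fun m =>
    Submodule.span_mono (fun z hz => by
      obtain ⟨b, _, rfl⟩ := hz
      exact Set.mem_range_self b)
  have hXmul : ∀ (i : Fin n), ∀ z ∈ S, Xg q r i * z ∈ S := by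
    intro i z hz
    refine Submodule.span_induction (p := fun z _ => Xg q r i * z ∈ S) ?_ ?_ ?_ ?_ hz
    · rintro _ ⟨b, rfl⟩
      exact hSm _ (keyQ q r hq0 hqinv hrinv (∑ l, b l) i.val i le_rfl b le_rfl)
    · show Xg q r i * 0 ∈ S
      rw [mul_zero]; exact Submodule.zero_mem _
    · intro u v _ _ hu hv
      show Xg q r i * (u + v) ∈ S
      rw [mul_add]; exact Submodule.add_mem _ hu hv
    · intro c u _ hu
      show Xg q r i * (c • u) ∈ S
      rw [mul_smul_comm]; exact Submodule.smul_mem _ c hu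
  have hmain : ∀ w : FreeAlgebra K (Fin n), ∀ z ∈ S,
      RingQuot.mkAlgHom K (PresRel K n q r) w * z ∈ S := by
    intro w
    induction w using FreeAlgebra.induction with
    | grade0 k =>
      intro z hz
      rw [AlgHom.commutes, ← Algebra.smul_def]
      exact Submodule.smul_mem _ k hz
    | grade1 i => exact hXmul i
    | mul a b iha ihb =>
      intro z hz
      rw [map_mul, mul_assoc]
      exact iha _ (ihb z hz)
    | add a b iha ihb =>
      intro z hz
      rw [map_add, add_mul]
      exact Submodule.add_mem _ (iha z hz) (ihb z hz)
  rw [eq_top_iff]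
  intro z _
  obtain ⟨w, rfl⟩ := RingQuot.mkAlgHom_surjective K (PresRel K n q r) z
  have h1 : (1 : RingQuot (PresRel K n q r)) ∈ S := by
    rw [← stdMonomial_zero (Xg q r)]
    exact Submodule.subset_span (Set.mem_range_self 0)
  simpa using hmain w 1 h1

end Span

section Overlap
variable (hq0 : ∀ i j : Fin n, i ≠ j → q i j ≠ 0)
    (hqinv : ∀ i j : Fin n, i ≠ j → q j i = (q i j)⁻¹)
    (hrinv : ∀ i j : Fin n, i ≠ j → r j i = -(q i j)⁻¹ * r i j)

lemma cc_mul (t : K) (x : RingQuot (PresRel K n q r)) :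
    algebraMap K (RingQuot (PresRel K n q r)) t * x = t • x := (Algebra.smul_def t x).symm

lemma mul_cc (t : K) (x : RingQuot (PresRel K n q r)) :
    x * algebraMap K (RingQuot (PresRel K n q r)) t = t • x := by
  rw [← Algebra.commutes, ← Algebra.smul_def]

lemma overlap {a b c : Fin n} (hab : a < b) (hbc : b < c) :
    (r b c * (q a b * q a c - 1)) • Xg q r a + (r a c * (q a b - q b c)) • Xg q r b
      + (r a b * (1 - q a c * q b c)) • Xg q r c = 0 := by
  have Eab := X_rel q r hab
  have Eac := X_rel q r (hab.trans hbc)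
  have Ebc := X_rel q r hbc
  set Ag := Xg q r a
  set Bg := Xg q r b
  set Cg := Xg q r c
  have w1 : Cg * (Bg * Ag) = (q a b * q a c * q b c) • (Ag * (Bg * Cg))
      + (q a b * q a c * r b c) • Ag + (q a b * r a c) • Bg + (r a b) • Cg := by
    rw [Eab]
    simp only [mul_add, mul_smul_comm, mul_cc]
    rw [← mul_assoc, Eac]
    simp only [add_mul, smul_mul_assoc, cc_mul, smul_smul, smul_add, mul_assoc]
    rw [Ebc]
    simp only [mul_add, mul_smul_comm, mul_cc, smul_smul, smul_add]
    module
  have w2 : (Cg * Bg) * Ag = (q a b * q a c * q b c) • (Ag * (Bg * Cg))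
      + (q b c * q a c * r a b) • Cg + (q b c * r a c) • Bg + (r b c) • Ag := by
    rw [Ebc]
    simp only [add_mul, smul_mul_assoc, cc_mul]
    rw [mul_assoc, Eac]
    simp only [mul_add, mul_smul_comm, mul_cc, smul_smul, smul_add, ← mul_assoc]
    rw [Eab]
    simp only [add_mul, smul_mul_assoc, cc_mul, smul_smul, smul_add, mul_assoc]
    module
  have heq : (q a b * q a c * q b c) • (Ag * (Bg * Cg))
      + (q a b * q a c * r b c) • Ag + (q a b * r a c) • Bg + (r a b) • Cg
      = (q a b * q a c * q b c) • (Ag * (Bg * Cg))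
      + (q b c * q a c * r a b) • Cg + (q b c * r a c) • Bg + (r b c) • Ag := by
    rw [← w1, ← w2, mul_assoc]
  linear_combination (norm := module) heq

include hq0 hqinv hrinv in
lemma coeff3_zero (hli : LinearIndependent K (fun a : Fin n → ℕ => stdMonomial n (Xg q r) a))
    {u v w : Fin n} (huv : u ≠ v) (hvw : v ≠ w) (huw : u ≠ w) {α β γ : K}
    (h : α • Xg q r u + β • Xg q r v + γ • Xg q r w = 0) : α = 0 ∧ β = 0 ∧ γ = 0 := by
  classical
  have hEuv := E_ne (n := n) huv
  have hEvw := E_ne (n := n) hvw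
  have hEuw := E_ne (n := n) huw
  set g : (Fin n → ℕ) → K := fun t => if t = E u then α else if t = E v then β else γ with hg
  have hs : ({E u, E v, E w} : Finset (Fin n → ℕ)).sum
      (fun t => g t • stdMonomial n (Xg q r) t) = 0 := by
    rw [Finset.sum_insert (by simp [hEuv, hEuw]), Finset.sum_insert (by simp [hEvw]),
      Finset.sum_singleton]
    simp only [hg, if_pos rfl, if_neg hEuv.symm, if_neg hEvw.symm, if_neg hEuw.symm,
      if_true, eq_self_iff_true]
    simpa only [stdMonomial_E, add_assoc] using h
  have := linearIndependent_iff'.1 hli {E u, E v, E w} g hs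
  refine ⟨?_, ?_, ?_⟩
  · have := this (E u) (by simp)
    simpa [hg] using this
  · have := this (E v) (by simp)
    simpa [hg, hEuv.symm] using this
  · have := this (E w) (by simp)
    simpa [hg, hEuw.symm, hEvw.symm] using this

include hq0 hqinv hrinv in
lemma cond_of_indep (hli : LinearIndependent K (fun a : Fin n → ℕ => stdMonomial n (Xg q r) a)) :
    ∀ i j k : Fin n, i ≠ j → j ≠ k → i ≠ k → r i j ≠ 0 →
      q i k = (q j k)⁻¹ ∧ q k j = (q j k)⁻¹ := by
  have sorted : ∀ a b c : Fin n, a < b → b < c →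
      (r b c * (q a b * q a c - 1) = 0) ∧ (r a c * (q a b - q b c) = 0) ∧
        (r a b * (1 - q a c * q b c) = 0) := by
    intro a b c hab hbc
    exact coeff3_zero q r hq0 hqinv hrinv hli (Fin.ne_of_lt hab) (Fin.ne_of_lt hbc)
      (Fin.ne_of_lt (hab.trans hbc)) (overlap q r hab hbc)
  have rsymm : ∀ i j : Fin n, i ≠ j → r i j ≠ 0 → r j i ≠ 0 := by
    intro i j hij hr
    rw [hrinv i j hij]
    simp only [neg_mul, ne_eq, neg_eq_zero, mul_eq_zero, not_or]
    exact ⟨inv_ne_zero (hq0 i j hij), hr⟩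
  have main' : ∀ i j k : Fin n, i < j → k ≠ i → k ≠ j → r i j ≠ 0 → q i k * q j k = 1 := by
    intro i j k hij hki hkj hr
    rcases lt_trichotomy k i with h1 | h1 | h1
    · -- k < i < j
      have h0 := (sorted k i j h1 hij).1
      have hz : q k i * q k j = 1 := by
        rcases mul_eq_zero.1 h0 with h' | h'
        · exact absurd h' hr
        · have := sub_eq_zero.1 h'; linear_combination this
      rw [hqinv k i hki, hqinv k j hkj, ← mul_inv, hz, inv_one]
    · exact absurd h1 hki
    · rcases lt_trichotomy k j with h2 | h2 | h2
      · -- i < k < j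
        have h0 := (sorted i k j h1 h2).2.1
        have h3 : q i k = q k j := by
          rcases mul_eq_zero.1 h0 with h' | h'
          · exact absurd h' hr
          · exact sub_eq_zero.1 h'
        rw [h3, hqinv k j hkj, mul_inv_cancel₀ (hq0 k j hkj)]
      · exact absurd h2 hkj
      · -- i < j < k
        have h0 := (sorted i j k hij h2).2.2
        rcases mul_eq_zero.1 h0 with h' | h'
        · exact absurd h' hr
        · have := sub_eq_zero.1 h'; linear_combination -this
  intro i j k hij hjk hik hr
  have goal1 : q i k * q j k = 1 := by
    rcases lt_or_gt_of_ne hij with h1 | h1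
    · exact main' i j k h1 (Ne.symm hik) (Ne.symm hjk) hr
    · rw [mul_comm]
      exact main' j i k h1 (Ne.symm hjk) (Ne.symm hik) (rsymm i j hij hr)
  exact ⟨eq_inv_of_mul_eq_one_left goal1, hqinv j k hjk⟩

end Overlap

lemma map_stdMonomial {R S : Type} [Ring R] [Ring S] [Algebra K R] [Algebra K S]
    (g : R →ₐ[K] S) (x : Fin n → R) (a : Fin n → ℕ) :
    g (stdMonomial n x a) = stdMonomial n (fun i => g (x i)) a := by
  unfold stdMonomial
  rw [map_list_prod, List.map_map]
  exact congrArg List.prod (List.map_congr_left fun i _ => by simp [map_pow])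

section Perm
variable (hq0 : ∀ i j : Fin n, i ≠ j → q i j ≠ 0)
    (hqinv : ∀ i j : Fin n, i ≠ j → q j i = (q i j)⁻¹)
    (hrinv : ∀ i j : Fin n, i ≠ j → r j i = -(q i j)⁻¹ * r i j)
    (hc : ∀ i j k : Fin n, i ≠ j → j ≠ k → i ≠ k → r i j ≠ 0 →
      q i k = (q j k)⁻¹ ∧ q k j = (q j k)⁻¹)

include hq0 hqinv hrinv hc in
theorem isMonBasis_perm (σ : Equiv.Perm (Fin n)) :
    IsMonBasis K n (fun i => Xg q r (σ i)) := by
  set q' : Fin n → Fin n → K := fun i j => q (σ i) (σ j) with hq'def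
  set r' : Fin n → Fin n → K := fun i j => r (σ i) (σ j) with hr'def
  have hσne : ∀ {i j : Fin n}, i ≠ j → σ i ≠ σ j := fun h he => h (σ.injective he)
  have hq0' : ∀ i j : Fin n, i ≠ j → q' i j ≠ 0 := fun i j h => hq0 _ _ (hσne h)
  have hqinv' : ∀ i j : Fin n, i ≠ j → q' j i = (q' i j)⁻¹ := fun i j h => hqinv _ _ (hσne h)
  have hrinv' : ∀ i j : Fin n, i ≠ j → r' j i = -(q' i j)⁻¹ * r' i j :=
    fun i j h => hrinv _ _ (hσne h)
  have hc' : ∀ i j k : Fin n, i ≠ j → j ≠ k → i ≠ k → r' i j ≠ 0 →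
      q' i k = (q' j k)⁻¹ ∧ q' k j = (q' j k)⁻¹ :=
    fun i j k hij hjk hik hr => hc _ _ _ (hσne hij) (hσne hjk) (hσne hik) hr
  have hli' : LinearIndependent K (fun a : Fin n → ℕ => stdMonomial n (Xg q' r') a) :=
    linIndep q' r' hq0' hqinv' hc'
  have hsp' := spanTop q' r' hq0' hqinv' hrinv'
  -- the two algebra maps
  let f : RingQuot (PresRel K n q' r') →ₐ[K] RingQuot (PresRel K n q r) :=
    RingQuot.liftAlgHom K ⟨FreeAlgebra.lift K (fun i => Xg q r (σ i)), by
      rintro _ _ ⟨i, j, hij⟩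
      simp only [map_mul, map_add, map_smul, FreeAlgebra.lift_ι_apply, AlgHom.commutes]
      exact X_rel' q r hq0 hqinv hrinv (hσne (Fin.ne_of_lt hij))⟩
  let g : RingQuot (PresRel K n q r) →ₐ[K] RingQuot (PresRel K n q' r') :=
    RingQuot.liftAlgHom K ⟨FreeAlgebra.lift K (fun i => Xg q' r' (σ.symm i)), by
      rintro _ _ ⟨i, j, hij⟩
      simp only [map_mul, map_add, map_smul, FreeAlgebra.lift_ι_apply, AlgHom.commutes]
      have h := X_rel' q' r' hq0' hqinv' hrinv'
        (i := σ.symm i) (j := σ.symm j)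
        (fun he => (Fin.ne_of_lt hij) (by simpa using congrArg σ he))
      simpa only [hq'def, hr'def, Equiv.apply_symm_apply] using h⟩
  have hfX : ∀ i, f (Xg q' r' i) = Xg q r (σ i) := fun i => by
    simp only [f, Xg, RingQuot.liftAlgHom_mkAlgHom_apply, FreeAlgebra.lift_ι_apply]
  have hgX : ∀ i, g (Xg q r i) = Xg q' r' (σ.symm i) := fun i => by
    simp only [g, Xg, RingQuot.liftAlgHom_mkAlgHom_apply, FreeAlgebra.lift_ι_apply]
  have hgf : ∀ z, g (f z) = z := by
    have : g.comp f = AlgHom.id K _ := by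
      apply RingQuot.ringQuot_ext'
      apply FreeAlgebra.hom_ext
      funext i
      simp only [AlgHom.comp_apply, Function.comp, AlgHom.coe_comp, AlgHom.id_comp]
      show g (f (Xg q' r' i)) = RingQuot.mkAlgHom K (PresRel K n q' r') (ι K i)
      rw [hfX, hgX, Equiv.symm_apply_apply]
      rfl
    exact fun z => AlgHom.congr_fun this z
  have hfg : ∀ z, f (g z) = z := by
    have : f.comp g = AlgHom.id K _ := by
      apply RingQuot.ringQuot_ext'
      apply FreeAlgebra.hom_ext
      funext i
      simp only [AlgHom.comp_apply, Function.comp, AlgHom.coe_comp, AlgHom.id_comp]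
      show f (g (Xg q r i)) = RingQuot.mkAlgHom K (PresRel K n q r) (ι K i)
      rw [hgX, hfX, Equiv.apply_symm_apply]
      rfl
    exact fun z => AlgHom.congr_fun this z
  have hinj : Function.Injective f := fun u v h => by rw [← hgf u, ← hgf v, h]
  have hsurj : Function.Surjective f := fun z => ⟨g z, hfg z⟩
  have hcomp : ∀ a : Fin n → ℕ,
      f (stdMonomial n (Xg q' r') a) = stdMonomial n (fun i => Xg q r (σ i)) a := by
    intro a
    rw [map_stdMonomial]
    congr 1
    funext i
    exact hfX i
  constructor
  · have := hli'.map' f.toLinearMap (LinearMap.ker_eq_bot.2 hinj)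
    have he : (f.toLinearMap ∘ fun a : Fin n → ℕ => stdMonomial n (Xg q' r') a) =
        fun a : Fin n → ℕ => stdMonomial n (fun i => Xg q r (σ i)) a := by
      funext a
      exact hcomp a
    rwa [he] at this
  · have hrange : Set.range (fun a : Fin n → ℕ => stdMonomial n (fun i => Xg q r (σ i)) a) =
        f.toLinearMap '' Set.range (fun a : Fin n → ℕ => stdMonomial n (Xg q' r') a) := by
      rw [← Set.range_comp]
      exact congrArg Set.range (funext fun a => (hcomp a).symm)
    rw [hrange, Submodule.span_image, hsp', Submodule.map_top, LinearMap.range_eq_top]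
    exact hsurj

end Perm
end QPBW

/-- Lemma 2.9 (equivalence (i) ⟺ (ii) ⟺ (iv)):  for the `K`-algebra `R` generated by
`x_1,…,x_n` subject to the relations `x_j x_i - q_{ij} x_i x_j = r_{ij}` (`1 ≤ i < j ≤ n`),
the following are equivalent: (1) the standard monomials form a `K`-basis of `R`;
(2) whenever `i, j, k` are distinct and `r_{ij} ≠ 0`, one has `q_{ik} = q_{kj} = q_{jk}⁻¹`;
(3) for every permutation `σ` the permuted standard monomials form a `K`-basis of `R`. -/
theorem stmt0 (K : Type) [Field K] [IsAlgClosed K] (n : ℕ) (hn : 2 ≤ n)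
    (q r : Fin n → Fin n → K)
    (hq0 : ∀ i j : Fin n, i ≠ j → q i j ≠ 0)
    (hqinv : ∀ i j : Fin n, i ≠ j → q j i = (q i j)⁻¹)
    (hrinv : ∀ i j : Fin n, i ≠ j → r j i = -(q i j)⁻¹ * r i j) :
    letI R := RingQuot (PresRel K n q r)
    let x : Fin n → R := fun i => RingQuot.mkAlgHom K (PresRel K n q r) (ι K i)
    (IsMonBasis K n x ↔
        ∀ i j k : Fin n, i ≠ j → j ≠ k → i ≠ k → r i j ≠ 0 →
          q i k = (q j k)⁻¹ ∧ q k j = (q j k)⁻¹) ∧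
      (IsMonBasis K n x ↔
        ∀ σ : Equiv.Perm (Fin n), IsMonBasis K n (fun i => x (σ i))) := by
  refine ⟨⟨fun hb => QPBW.cond_of_indep q r hq0 hqinv hrinv hb.1,
    fun hcnd => ⟨QPBW.linIndep q r hq0 hqinv hcnd, QPBW.spanTop q r hq0 hqinv hrinv⟩⟩,
    ⟨fun hb σ => QPBW.isMonBasis_perm q r hq0 hqinv hrinv
      (QPBW.cond_of_indep q r hq0 hqinv hrinv hb.1) σ,
    fun h => h 1⟩⟩
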